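/- Let 1 → R → F → G → 1 be a presentation of a group G with F a free group on a finite set and R a normal subgroup, and let R̄ = R/[R,R] be the relation module with its ℤ[G]-module structure induced by conjugation. Suppose R̄ decomposes as a ℤ[G]-module into a direct sum ⊕_{i ∈ I} ℤ[G]/ℤ[G](g_i − 1) of cyclic modules, where each summand is the quotient of ℤ[G] by the left ideal generated by g_i − 1 for some g_i ∈ G (this holds in particular for every CA-aspherical presentation). Then R/[R,F] is a free abelian group; in particular it is torsion-free, i.e., the presentation is quasirational. -/

import Mathlib

/-!
STATEMENT 14: Let `1 → R → F → G → 1` be a finite-type presentation and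
`R̄ = R/[R,R]` the relation module with its conjugation `ℤ[G]`-module structure.
If `R̄ ≅ ⊕ᵢ ℤ[G]/ℤ[G](gᵢ - 1)` decomposes as a direct sum of such cyclic
modules (as happens for every CA-aspherical presentation), then `R/[R,F]` is a
free abelian group; in particular it is torsion-free, i.e. the presentation is
quasirational.
-/

open scoped DirectSum
open scoped commutatorElement

variable {X G : Type} [Group G]

/-- The subgroup `[ker π, F]` of the free group `F`. -/
def relComm (π : FreeGroup X →* G) : Subgroup (FreeGroup X) :=
  ⁅π.ker, (⊤ : Subgroup (FreeGroup X))⁆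

instance (π : FreeGroup X →* G) : (relComm π).Normal :=
  Subgroup.commutator_normal _ _

/-- `R/[R,F]`, realized as the image of `R = ker π` in `F/[R,F]`. -/
def relCoinv (π : FreeGroup X →* G) : Subgroup (FreeGroup X ⧸ relComm π) :=
  Subgroup.map (QuotientGroup.mk' (relComm π)) π.ker

theorem comm_of_map {F : Type} [Group F] (N L : Subgroup F) [N.Normal]
    (h : ∀ a ∈ L, ∀ b ∈ L, ⁅a, b⁆ ∈ N)
    (x y : ↥(L.map (QuotientGroup.mk' N))) : x * y = y * x := by
  obtain ⟨x, hx⟩ := x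
  obtain ⟨y, hy⟩ := y
  obtain ⟨a, ha, rfl⟩ := hx
  obtain ⟨b, hb, rfl⟩ := hy
  apply Subtype.ext
  show QuotientGroup.mk' N a * QuotientGroup.mk' N b
      = QuotientGroup.mk' N b * QuotientGroup.mk' N a
  rw [← map_mul, ← map_mul, QuotientGroup.mk'_eq_mk']
  refine ⟨⁅b⁻¹, a⁻¹⁆, h _ (inv_mem hb) _ (inv_mem ha), ?_⟩
  simp only [commutatorElement_def]
  group

/-- `R/[R,F]` is an abelian group. -/
instance (π : FreeGroup X →* G) : CommGroup ↥(relCoinv π) :=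
  { (inferInstance : Group ↥(relCoinv π)) with
    mul_comm := comm_of_map (relComm π) π.ker
      (fun a ha b _ => Subgroup.commutator_mem_commutator ha (Subgroup.mem_top b)) }

/-- Functoriality of abelianization on automorphisms. -/
def abAut {H : Type} [Group H] : MulAut H →* MulAut (Abelianization H) where
  toFun e := e.abelianizationCongr
  map_one' := by
    ext x
    induction x using QuotientGroup.induction_on with
    | _ z => rfl
  map_mul' e₁ e₂ := by
    ext x
    induction x using QuotientGroup.induction_on with
    | _ z => rfl

/-- The action of `F` on the abelianization of `R = ker π`, induced by conjugation. -/
def actF (π : FreeGroup X →* G) : FreeGroup X →* MulAut (Abelianization ↥π.ker) :=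
  abAut.comp MulAut.conjNormal

theorem ker_le_ker_actF (π : FreeGroup X →* G) : π.ker ≤ (actF π).ker := by
  intro f hf
  rw [MonoidHom.mem_ker]
  ext x
  induction x using QuotientGroup.induction_on with
  | _ z =>
    show Abelianization.of (MulAut.conjNormal f z) = Abelianization.of z
    have hz : MulAut.conjNormal f z = ⟨f, hf⟩ * z * ⟨f, hf⟩⁻¹ := by
      apply Subtype.ext
      simp [MulAut.conjNormal_apply]
    rw [hz, map_mul, map_mul, map_inv, mul_right_comm]
    simp

/-- The conjugation action of `G` on the relation module. -/
noncomputable def actG (π : FreeGroup X →* G) (hπ : Function.Surjective π) :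
    G →* MulAut (Abelianization ↥π.ker) :=
  (π.liftOfRightInverse (Function.surjInv hπ) (Function.rightInverse_surjInv hπ))
    ⟨actF π, ker_le_ker_actF π⟩

/-- The relation module `R̄ = R/[R,R]` as a `G`-representation over `ℤ`. -/
noncomputable def relRep (π : FreeGroup X →* G) (hπ : Function.Surjective π) :
    Representation ℤ G (Additive (Abelianization ↥π.ker)) where
  toFun g := ((MonoidHom.toAdditive (actG π hπ g).toMonoidHom)).toIntLinearMap
  map_one' := by
    ext x
    show (MonoidHom.toAdditive (MulEquiv.toMonoidHom ((actG π hπ) 1))).toIntLinearMap x = x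
    rw [map_one]
    rfl
  map_mul' g₁ g₂ := by
    ext x
    show (MonoidHom.toAdditive (MulEquiv.toMonoidHom ((actG π hπ) (g₁ * g₂)))).toIntLinearMap x
        = (MonoidHom.toAdditive (MulEquiv.toMonoidHom ((actG π hπ) g₁))).toIntLinearMap
            ((MonoidHom.toAdditive (MulEquiv.toMonoidHom ((actG π hπ) g₂))).toIntLinearMap x)
    rw [map_mul]
    rfl


section Aug
variable (G : Type) [Group G]

noncomputable def aug : MonoidAlgebra ℤ G →ₐ[ℤ] ℤ := (MonoidAlgebra.lift ℤ ℤ G) 1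

lemma aug_of (g : G) : aug G (MonoidAlgebra.of ℤ G g) = 1 := by
  simp [aug]

lemma sub_aug_mem (x : MonoidAlgebra ℤ G) :
    x - (aug G x) • 1 ∈
      Submodule.span ℤ {y : MonoidAlgebra ℤ G | ∃ h : G, MonoidAlgebra.of ℤ G h - 1 = y} := by
  induction x using MonoidAlgebra.induction_on with
  | of g =>
      rw [aug_of, one_smul]
      exact Submodule.subset_span ⟨g, rfl⟩
  | add f h hf hh =>
      have : f + h - (aug G (f + h)) • 1 = (f - aug G f • 1) + (h - aug G h • 1) := by
        rw [map_add, add_smul]; abel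
      rw [this]; exact Submodule.add_mem _ hf hh
  | smul r f hf =>
      have : r • f - (aug G (r • f)) • 1 = r • (f - aug G f • 1) := by
        rw [map_smul, smul_sub, smul_assoc]
      rw [this]; exact Submodule.smul_mem _ r hf
end Aug

section Summand
variable (G : Type) [Group G] (g₀ : G)

noncomputable abbrev cyc : Type := MonoidAlgebra ℤ G ⧸
  Ideal.span {(MonoidAlgebra.of ℤ G g₀ : MonoidAlgebra ℤ G) - 1}

noncomputable def epsQ : cyc G g₀ →+ ℤ :=
  QuotientAddGroup.lift
    (Ideal.span {(MonoidAlgebra.of ℤ G g₀ : MonoidAlgebra ℤ G) - 1}).toAddSubgroup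
    (aug G).toAddMonoidHom
    (by
      intro x hx
      rw [Submodule.mem_toAddSubgroup, Ideal.mem_span_singleton'] at hx
      obtain ⟨a, rfl⟩ := hx
      show aug G (a * (MonoidAlgebra.of ℤ G g₀ - 1)) = 0
      rw [map_mul, map_sub, map_one, aug_of, sub_self, mul_zero])

lemma epsQ_mk (x : MonoidAlgebra ℤ G) :
    epsQ G g₀ (Submodule.Quotient.mk x) = aug G x := rfl
end Summand

section DS
variable (G : Type) [Group G] (I : Type) [DecidableEq I] (g : I → G)

noncomputable abbrev Pds : Type := ⨁ i : I, cyc G (g i)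

/-- generators of the coinvariants submodule -/
def SpSet : Set (Pds G I g) :=
  {y | ∃ (h : G) (m : Pds G I g), MonoidAlgebra.of ℤ G h • m - m = y}

noncomputable def Dp : Submodule (MonoidAlgebra ℤ G) (Pds G I g) :=
  Submodule.span _ (SpSet G I g)

noncomputable def Phi : Pds G I g →ₗ[ℤ] ⨁ _ : I, ℤ :=
  DirectSum.toModule ℤ I _
    (fun i => (DirectSum.lof ℤ I (fun _ => ℤ) i) ∘ₗ (epsQ G (g i)).toIntLinearMap)

noncomputable def Theta : (⨁ _ : I, ℤ) →ₗ[ℤ] Pds G I g :=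
  DirectSum.toModule ℤ I _
    (fun i => (DirectSum.lof ℤ I (fun i => cyc G (g i)) i) ∘ₗ
      LinearMap.toSpanSingleton ℤ _ (Submodule.Quotient.mk 1))

lemma Phi_of (i : I) (q : cyc G (g i)) :
    Phi G I g (DirectSum.of (fun i => cyc G (g i)) i q)
      = DirectSum.of (fun _ : I => ℤ) i (epsQ G (g i) q) := by
  show Phi G I g (DirectSum.lof ℤ I (fun i => cyc G (g i)) i q)
      = DirectSum.lof ℤ I (fun _ : I => ℤ) i (epsQ G (g i) q)
  rw [Phi, DirectSum.toModule_lof]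
  rfl

lemma Theta_of (i : I) (n : ℤ) :
    Theta G I g (DirectSum.of (fun _ : I => ℤ) i n)
      = DirectSum.of (fun i => cyc G (g i)) i (n • Submodule.Quotient.mk 1) := by
  show Theta G I g (DirectSum.lof ℤ I (fun _ : I => ℤ) i n)
      = DirectSum.lof ℤ I (fun i => cyc G (g i)) i (n • Submodule.Quotient.mk 1)
  rw [Theta, DirectSum.toModule_lof]
  rfl

lemma Phi_Theta (y : ⨁ _ : I, ℤ) : Phi G I g (Theta G I g y) = y := by
  induction y using DirectSum.induction_on with
  | zero => rw [map_zero, map_zero]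
  | of i n =>
      rw [Theta_of, Phi_of]
      congr 1
      show epsQ G (g i) (n • Submodule.Quotient.mk 1) = n
      rw [AddMonoidHom.map_zsmul, epsQ_mk, map_one, smul_eq_mul, mul_one]
  | add x y hx hy => rw [map_add, map_add, hx, hy]

lemma of_smul_eq (i : I) (b a : MonoidAlgebra ℤ G) :
    b • (DirectSum.of (fun i => cyc G (g i)) i (Submodule.Quotient.mk a))
      = DirectSum.of (fun i => cyc G (g i)) i (Submodule.Quotient.mk (b * a)) := by
  rw [← DirectSum.lof_eq_of (MonoidAlgebra ℤ G), ← map_smul]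
  rfl

lemma Phi_of_smul (h : G) (x : Pds G I g) :
    Phi G I g (MonoidAlgebra.of ℤ G h • x) = Phi G I g x := by
  induction x using DirectSum.induction_on with
  | zero => rw [smul_zero]
  | of i q =>
      obtain ⟨a, rfl⟩ := Submodule.Quotient.mk_surjective _ q
      rw [of_smul_eq, Phi_of, Phi_of]
      congr 1
      rw [epsQ_mk, epsQ_mk, map_mul, aug_of, one_mul]
  | add x y hx hy => rw [smul_add, map_add, map_add, hx, hy]

lemma sub_theta_phi_mem (x : Pds G I g) :
    x - Theta G I g (Phi G I g x) ∈ Dp G I g := by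
  induction x using DirectSum.induction_on with
  | zero => simpa using Submodule.zero_mem _
  | of i q =>
      obtain ⟨a, rfl⟩ := Submodule.Quotient.mk_surjective _ q
      have χdef : ∀ b : MonoidAlgebra ℤ G,
          ((DirectSum.lof (MonoidAlgebra ℤ G) I (fun i => cyc G (g i)) i) ∘ₗ
            (Ideal.span {(MonoidAlgebra.of ℤ G (g i) : MonoidAlgebra ℤ G) - 1}).mkQ) b
          = DirectSum.of (fun i => cyc G (g i)) i (Submodule.Quotient.mk b) := fun b => rfl
      set χ : MonoidAlgebra ℤ G →ₗ[MonoidAlgebra ℤ G] Pds G I g :=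
        (DirectSum.lof (MonoidAlgebra ℤ G) I (fun i => cyc G (g i)) i) ∘ₗ
          (Ideal.span {(MonoidAlgebra.of ℤ G (g i) : MonoidAlgebra ℤ G) - 1}).mkQ with hχ
      have hval : DirectSum.of (fun i => cyc G (g i)) i (Submodule.Quotient.mk a) -
          Theta G I g (Phi G I g (DirectSum.of (fun i => cyc G (g i)) i
            (Submodule.Quotient.mk a))) = χ (a - (aug G a) • 1) := by
        rw [Phi_of, epsQ_mk, Theta_of, map_sub, χdef, χdef]
        congr 1
      rw [hval]
      have hsub : a - (aug G a) • 1 ∈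
          Submodule.span ℤ {y : MonoidAlgebra ℤ G | ∃ h : G, MonoidAlgebra.of ℤ G h - 1 = y} :=
        sub_aug_mem G a
      have hle : Submodule.span ℤ {y : MonoidAlgebra ℤ G | ∃ h : G, MonoidAlgebra.of ℤ G h - 1 = y}
          ≤ Submodule.comap (χ.restrictScalars ℤ) ((Dp G I g).restrictScalars ℤ) := by
        rw [Submodule.span_le]
        rintro _ ⟨h, rfl⟩
        show χ (MonoidAlgebra.of ℤ G h - 1) ∈ Dp G I g
        have : MonoidAlgebra.of ℤ G h - 1 = MonoidAlgebra.of ℤ G h • (1 : MonoidAlgebra ℤ G) - 1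
          := by rw [smul_eq_mul, mul_one]
        rw [this, map_sub, map_smul]
        exact Submodule.subset_span ⟨h, χ 1, rfl⟩
      exact hle hsub
  | add x y hx hy =>
      have : x + y - Theta G I g (Phi G I g (x + y)) =
          (x - Theta G I g (Phi G I g x)) + (y - Theta G I g (Phi G I g y)) := by
        rw [map_add, map_add]; abel
      rw [this]; exact Submodule.add_mem _ hx hy

lemma Phi_algebra_smul (a : MonoidAlgebra ℤ G) (x : Pds G I g) :
    Phi G I g (a • x) = aug G a • Phi G I g x := by
  induction a using MonoidAlgebra.induction_on with
  | of h => rw [Phi_of_smul, aug_of, one_smul]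
  | add a b ha hb => rw [add_smul, map_add, ha, hb, map_add, add_smul]
  | smul r a ha => rw [smul_assoc, map_smul, ha, map_smul, smul_assoc]

lemma Dp_le_ker (x : Pds G I g) (hx : x ∈ Dp G I g) : Phi G I g x = 0 := by
  let K : Submodule (MonoidAlgebra ℤ G) (Pds G I g) :=
    { carrier := {x | Phi G I g x = 0}
      add_mem' := fun ha hb => by
        simp only [Set.mem_setOf_eq] at *
        rw [map_add, ha, hb, add_zero]
      zero_mem' := map_zero _
      smul_mem' := fun a x hx => by
        simp only [Set.mem_setOf_eq] at *
        rw [Phi_algebra_smul, hx, smul_zero] }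
  have : Dp G I g ≤ K := by
    rw [Dp, Submodule.span_le]
    rintro _ ⟨h, m, rfl⟩
    show Phi G I g _ = 0
    rw [map_sub, Phi_of_smul, sub_self]
  exact this hx

/-- the coinvariants of the direct sum are free -/
noncomputable def quotEquivFree : (@HasQuotient.Quotient (Pds G I g) (Submodule (MonoidAlgebra ℤ G) (Pds G I g)) (@Submodule.hasQuotient (MonoidAlgebra ℤ G) (Pds G I g) _ _ _) (Dp G I g)) ≃+ ⨁ _ : I, ℤ where
  toFun := QuotientAddGroup.lift (@Submodule.toAddSubgroup (MonoidAlgebra ℤ G) (Pds G I g) inferInstance inferInstance inferInstance (Dp G I g)) (Phi G I g).toAddMonoidHom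
    (fun x hx => AddMonoidHom.mem_ker.mpr (Dp_le_ker G I g x hx))
  invFun := fun y => Submodule.Quotient.mk (Theta G I g y)
  left_inv := by
    intro q
    obtain ⟨x, rfl⟩ := Submodule.Quotient.mk_surjective _ q
    show Submodule.Quotient.mk (Theta G I g (Phi G I g x)) = Submodule.Quotient.mk x
    rw [Submodule.Quotient.eq]
    convert @Submodule.neg_mem (MonoidAlgebra ℤ G) (Pds G I g) inferInstance inferInstance _ (Dp G I g) _ (sub_theta_phi_mem G I g x) using 1
    abel
  right_inv := fun y => Phi_Theta G I g y
  map_add' := map_add _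

end DS

section GroupSide
variable {X G : Type} [Group G] (π : FreeGroup X →* G) (hπ : Function.Surjective π)


lemma relComm_le_ker : relComm π ≤ π.ker := by
  rw [relComm]
  refine Subgroup.commutator_le.mpr (fun g₁ h₁ g₂ _ => ?_)
  have : π ⁅g₁, g₂⁆ = ⁅π g₁, π g₂⁆ := map_commutatorElement π g₁ g₂
  rw [MonoidHom.mem_ker, this, MonoidHom.mem_ker.mp h₁, commutatorElement_def]
  group

/-- The image of `[R,F]` in the abelianization of `R`. -/
def Qs : Subgroup (Abelianization ↥π.ker) :=
  Subgroup.map Abelianization.of ((relComm π).subgroupOf π.ker)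

/-- generators of the coinvariants submodule of the relation module -/
def SDset : Set ((relRep π hπ).asModule) :=
  {y | ∃ (g' : G) (m : (relRep π hπ).asModule), MonoidAlgebra.of ℤ G g' • m - m = y}

noncomputable def DD : Submodule (MonoidAlgebra ℤ G) ((relRep π hπ).asModule) :=
  Submodule.span _ (SDset π hπ)

lemma of_smul_asM (g' : G) (m : (relRep π hπ).asModule) :
    MonoidAlgebra.of ℤ G g' • m = (relRep π hπ) g' m :=
  ((relRep π hπ).asModuleEquiv_symm_map_rho g' m).symm

lemma rho_of_conj (f : FreeGroup X) (r : ↥π.ker)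
    (h : f * ↑r * f⁻¹ ∈ π.ker) :
    (relRep π hπ) (π f) (Additive.ofMul (Abelianization.of r))
      = Additive.ofMul (Abelianization.of (⟨f * ↑r * f⁻¹, h⟩ : ↥π.ker)) := by
  show Additive.ofMul ((actG π hπ (π f)) (Abelianization.of r)) = _
  congr 1
  rw [actG, MonoidHom.liftOfRightInverse_comp_apply]
  show (abAut (MulAut.conjNormal f)) (Abelianization.of r) = _
  show (MulAut.conjNormal f).abelianizationCongr (Abelianization.of r) = _
  rw [abelianizationCongr_of]
  exact congrArg Abelianization.of (Subtype.ext (by simp [MulAut.conjNormal_apply]))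


lemma conj_mem_ker (f : FreeGroup X) (r : FreeGroup X) (hr : r ∈ π.ker) :
    f * r * f⁻¹ ∈ π.ker := (MonoidHom.normal_ker π).conj_mem r hr f

lemma abel_of_surj :
    Function.Surjective (Abelianization.of : ↥π.ker → Abelianization ↥π.ker) :=
  fun a => Quotient.inductionOn' a (fun z => ⟨z, rfl⟩)

lemma relComm_subset_DD (x : FreeGroup X) (hx : x ∈ relComm π) :
    ∃ h : x ∈ π.ker,
      (Additive.ofMul (Abelianization.of (⟨x, h⟩ : ↥π.ker)) : (relRep π hπ).asModule)
        ∈ DD π hπ := by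
  rw [relComm, Subgroup.commutator_def] at hx
  induction hx using Subgroup.closure_induction with
  | mem c hc =>
      obtain ⟨r, hr, f, -, rfl⟩ := hc
      have hconj : f * r⁻¹ * f⁻¹ ∈ π.ker := conj_mem_ker π f r⁻¹ (inv_mem hr)
      have hm : ⁅r, f⁆ ∈ π.ker := by
        have : ⁅r, f⁆ = r * (f * r⁻¹ * f⁻¹) := by group
        rw [this]
        exact mul_mem hr hconj
      refine ⟨hm, ?_⟩
      have hsplit : (⟨⁅r, f⁆, hm⟩ : ↥π.ker) = ⟨r, hr⟩ * ⟨f * r⁻¹ * f⁻¹, hconj⟩ := by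
        apply Subtype.ext
        show ⁅r, f⁆ = r * (f * r⁻¹ * f⁻¹)
        group
      have hval : (Additive.ofMul (Abelianization.of (⟨⁅r, f⁆, hm⟩ : ↥π.ker))
            : (relRep π hπ).asModule)
          = Additive.ofMul (Abelianization.of (⟨r, hr⟩ : ↥π.ker))
            + Additive.ofMul (Abelianization.of (⟨f * r⁻¹ * f⁻¹, hconj⟩ : ↥π.ker)) := by
        rw [hsplit, map_mul]
        rfl
      have hrho : (Additive.ofMul (Abelianization.of (⟨f * r⁻¹ * f⁻¹, hconj⟩ : ↥π.ker))
            : (relRep π hπ).asModule)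
          = (relRep π hπ) (π f)
              (Additive.ofMul (Abelianization.of ((⟨r, hr⟩ : ↥π.ker)⁻¹))) := by
        rw [rho_of_conj π hπ f (⟨r, hr⟩ : ↥π.ker)⁻¹ hconj]
        exact congrArg (fun z => Additive.ofMul (Abelianization.of z)) (Subtype.ext rfl)
      obtain ⟨m, hmdef⟩ : ∃ m : (relRep π hπ).asModule,
          m = Additive.ofMul (Abelianization.of (⟨r, hr⟩ : ↥π.ker)) := ⟨_, rfl⟩
      have hneg : (Additive.ofMul (Abelianization.of ((⟨r, hr⟩ : ↥π.ker)⁻¹))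
            : (relRep π hπ).asModule)
          = -m := by
        rw [hmdef, map_inv]
        rfl
      have hmem : -(MonoidAlgebra.of ℤ G (π f) • m - m) ∈ DD π hπ :=
        Submodule.neg_mem _ (Submodule.subset_span ⟨π f, m, rfl⟩)
      have heq : (Additive.ofMul (Abelianization.of (⟨⁅r, f⁆, hm⟩ : ↥π.ker))
            : (relRep π hπ).asModule)
          = -(MonoidAlgebra.of ℤ G (π f) • m - m) := by
        rw [hval, hrho, hneg, show (relRep π hπ) (π f) (-m) = -((relRep π hπ) (π f) m) from map_neg _ m, ← of_smul_asM π hπ (π f) m, ← hmdef]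
        abel
      rw [heq]
      exact hmem
  | one =>
      refine ⟨one_mem _, ?_⟩
      have : (⟨(1 : FreeGroup X), one_mem _⟩ : ↥π.ker) = 1 := rfl
      rw [this, map_one]
      exact Submodule.zero_mem _
  | mul a b ha hb iha ihb =>
      obtain ⟨hamem, haval⟩ := iha
      obtain ⟨hbmem, hbval⟩ := ihb
      refine ⟨mul_mem hamem hbmem, ?_⟩
      have : (⟨a * b, mul_mem hamem hbmem⟩ : ↥π.ker) = ⟨a, hamem⟩ * ⟨b, hbmem⟩ := rfl
      rw [this, map_mul]
      exact Submodule.add_mem _ haval hbval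
  | inv a ha iha =>
      obtain ⟨hamem, haval⟩ := iha
      refine ⟨inv_mem hamem, ?_⟩
      have : (⟨a⁻¹, inv_mem hamem⟩ : ↥π.ker) = (⟨a, hamem⟩ : ↥π.ker)⁻¹ := rfl
      rw [this, map_inv]
      exact Submodule.neg_mem _ haval

/-- the carrier of `Qs` as a `ℤ[G]`-submodule of the relation module -/
noncomputable def QsubM : Submodule (MonoidAlgebra ℤ G) ((relRep π hπ).asModule) where
  carrier := {m | (Additive.toMul (α := Abelianization ↥π.ker) m) ∈ Qs π}
  add_mem' := fun {a b} ha hb => by exact (Qs π).mul_mem ha hb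
  zero_mem' := (Qs π).one_mem
  smul_mem' := by
    have key : ∀ (g' : G) (m : (relRep π hπ).asModule),
        (Additive.toMul (α := Abelianization ↥π.ker) m) ∈ Qs π →
        (Additive.toMul (α := Abelianization ↥π.ker) ((relRep π hπ) g' m)) ∈ Qs π := by
      intro g' m hm
      obtain ⟨f, rfl⟩ := hπ g'
      obtain ⟨k, hk, hkm⟩ := hm
      have hmk : m = Additive.ofMul (Abelianization.of k) :=
        congrArg Additive.ofMul hkm.symm
      subst hmk
      rw [rho_of_conj π hπ f k (conj_mem_ker π f ↑k k.2)]
      have hkrel : ↑k ∈ relComm π := Subgroup.mem_subgroupOf.mp hk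
      have hcon : f * ↑k * f⁻¹ ∈ relComm π :=
        (inferInstance : (relComm π).Normal).conj_mem ↑k hkrel f
      exact ⟨_, Subgroup.mem_subgroupOf.mpr hcon, rfl⟩
    intro a x hx
    induction a using MonoidAlgebra.induction_on with
    | of g' =>
        show Additive.toMul (α := Abelianization ↥π.ker)
          (MonoidAlgebra.of ℤ G g' • x) ∈ Qs π
        rw [of_smul_asM]
        exact key g' x hx
    | add a b ha hb =>
        show Additive.toMul (α := Abelianization ↥π.ker) ((a + b) • x) ∈ Qs π
        rw [add_smul]
        exact (Qs π).mul_mem ha hb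
    | smul r a ha =>
        show Additive.toMul (α := Abelianization ↥π.ker) ((r • a) • x) ∈ Qs π
        rw [smul_assoc]
        exact zpow_mem (show Additive.toMul (α := Abelianization ↥π.ker) (a • x) ∈ Qs π
          from ha) r

lemma SD_subset_QsubM : SDset π hπ ⊆ (QsubM π hπ : Set ((relRep π hπ).asModule)) := by
  rintro y ⟨g', m, rfl⟩
  obtain ⟨f, rfl⟩ := hπ g'
  obtain ⟨r, hr⟩ := abel_of_surj π (Additive.toMul (α := Abelianization ↥π.ker) m)
  have hm : m = Additive.ofMul (Abelianization.of r) := congrArg Additive.ofMul hr.symm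
  have hc := conj_mem_ker π f ↑r r.2
  have heq : MonoidAlgebra.of ℤ G (π f) • m - m
      = (Additive.ofMul (Abelianization.of
          ((⟨f * ↑r * f⁻¹, hc⟩ : ↥π.ker) * r⁻¹)) : (relRep π hπ).asModule) := by
    rw [of_smul_asM, hm, rho_of_conj π hπ f r hc, map_mul, map_inv]
    rfl
  rw [heq]
  show Additive.toMul (α := Abelianization ↥π.ker)
      (Additive.ofMul (Abelianization.of ((⟨f * ↑r * f⁻¹, hc⟩ : ↥π.ker) * r⁻¹))) ∈ Qs π
  refine ⟨_, Subgroup.mem_subgroupOf.mpr ?_, rfl⟩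
  have hcomm : (↑((⟨f * ↑r * f⁻¹, hc⟩ : ↥π.ker) * r⁻¹) : FreeGroup X)
      = ⁅(↑r : FreeGroup X), f⁆⁻¹ := by
    show f * ↑r * f⁻¹ * (↑r)⁻¹ = ⁅(↑r : FreeGroup X), f⁆⁻¹
    group
  show (↑((⟨f * ↑r * f⁻¹, hc⟩ : ↥π.ker) * r⁻¹) : FreeGroup X) ∈ relComm π
  rw [hcomm, relComm]
  exact inv_mem (Subgroup.commutator_mem_commutator r.2 (Subgroup.mem_top f))

lemma DD_iff_Qs (a : Abelianization ↥π.ker) :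
    a ∈ Qs π ↔ (Additive.ofMul a : (relRep π hπ).asModule) ∈ DD π hπ := by
  constructor
  · rintro ⟨k, hk, rfl⟩
    obtain ⟨h, hval⟩ := relComm_subset_DD π hπ ↑k (Subgroup.mem_subgroupOf.mp hk)
    have hsub : (⟨↑k, h⟩ : ↥π.ker) = k := Subtype.ext rfl
    rwa [hsub] at hval
  · intro hD
    have hle : DD π hπ ≤ QsubM π hπ := Submodule.span_le.mpr (SD_subset_QsubM π hπ)
    exact hle hD

instance K_normal : ((relComm π).subgroupOf π.ker).Normal := by
  constructor
  intro n hn h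
  refine Subgroup.mem_subgroupOf.mpr ?_
  exact (inferInstance : (relComm π).Normal).conj_mem ↑n (Subgroup.mem_subgroupOf.mp hn) ↑h

noncomputable def phiHom : ↥π.ker →* FreeGroup X ⧸ relComm π :=
  (QuotientGroup.mk' (relComm π)).comp π.ker.subtype

lemma phiHom_ker : (phiHom π).ker = (relComm π).subgroupOf π.ker := by
  rw [phiHom, ← MonoidHom.comap_ker, QuotientGroup.ker_mk']
  rfl

lemma phiHom_range : (phiHom π).range = relCoinv π := by
  rw [phiHom, MonoidHom.range_comp, Subgroup.range_subtype]
  rfl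

noncomputable def eq1 : (↥π.ker ⧸ (relComm π).subgroupOf π.ker) ≃* ↥(relCoinv π) :=
  (QuotientGroup.quotientMulEquivOfEq (phiHom_ker π).symm).trans
    ((QuotientGroup.quotientKerEquivRange (phiHom π)).trans
      (MulEquiv.subgroupCongr (phiHom_range π)))

lemma K_comm (a b : ↥π.ker ⧸ (relComm π).subgroupOf π.ker) : a * b = b * a := by
  induction a using QuotientGroup.induction_on with | _ x =>
  induction b using QuotientGroup.induction_on with | _ y =>
  show QuotientGroup.mk (x * y) = QuotientGroup.mk (y * x)
  rw [QuotientGroup.eq]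
  refine Subgroup.mem_subgroupOf.mpr ?_
  have hval : (↑((x * y)⁻¹ * (y * x)) : FreeGroup X)
      = ⁅(↑y : FreeGroup X)⁻¹, (↑x : FreeGroup X)⁻¹⁆ := by
    show ((x : FreeGroup X) * (y : FreeGroup X))⁻¹ * ((y : FreeGroup X) * (x : FreeGroup X)) = ⁅(↑y : FreeGroup X)⁻¹, (↑x : FreeGroup X)⁻¹⁆
    group
  rw [hval, relComm]
  exact Subgroup.commutator_mem_commutator (inv_mem y.2) (Subgroup.mem_top _)

noncomputable def eq2 : (↥π.ker ⧸ (relComm π).subgroupOf π.ker)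
    ≃* (Abelianization ↥π.ker ⧸ Qs π) :=
  letI : CommGroup (↥π.ker ⧸ (relComm π).subgroupOf π.ker) :=
    { (inferInstance : Group (↥π.ker ⧸ (relComm π).subgroupOf π.ker)) with
      mul_comm := K_comm π }
  { toFun := QuotientGroup.lift ((relComm π).subgroupOf π.ker)
      ((QuotientGroup.mk' (Qs π)).comp Abelianization.of)
      (fun x hx => by
        show QuotientGroup.mk' (Qs π) (Abelianization.of x) = 1
        rw [QuotientGroup.mk'_apply, QuotientGroup.eq_one_iff]
        exact ⟨x, hx, rfl⟩)
    invFun := QuotientGroup.lift (Qs π)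
      (Abelianization.lift (QuotientGroup.mk' ((relComm π).subgroupOf π.ker)))
      (by
        rintro _ ⟨k, hk, rfl⟩
        show Abelianization.lift (QuotientGroup.mk' ((relComm π).subgroupOf π.ker))
          (Abelianization.of k) = 1
        rw [Abelianization.lift_apply_of, QuotientGroup.mk'_apply, QuotientGroup.eq_one_iff]
        exact hk)
    left_inv := by
      intro q
      induction q using QuotientGroup.induction_on with | _ x =>
      rfl
    right_inv := by
      intro q
      induction q using QuotientGroup.induction_on with | _ a =>
      obtain ⟨r, rfl⟩ := abel_of_surj π a
      rfl
    map_mul' := map_mul _ }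

noncomputable def eFull : ↥(relCoinv π) ≃* (Abelianization ↥π.ker ⧸ Qs π) :=
  (eq1 π).symm.trans (eq2 π)

noncomputable def e0 : Abelianization ↥π.ker ≃ (relRep π hπ).asModule where
  toFun := fun a => Additive.ofMul a
  invFun := fun m => Additive.toMul m
  left_inv := fun _ => rfl
  right_inv := fun _ => rfl

noncomputable def EAq : (Abelianization ↥π.ker ⧸ Qs π)
    ≃ ((relRep π hπ).asModule ⧸ DD π hπ) :=
  Quotient.congr (e0 π hπ) (by
    intro a b
    rw [QuotientGroup.leftRel_apply, Submodule.quotientRel_def]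
    have hiff : a⁻¹ * b ∈ Qs π ↔ a * b⁻¹ ∈ Qs π := by
      constructor <;> intro h <;>
        · have := inv_mem h
          rwa [mul_inv_rev, inv_inv, mul_comm] at this
    have hsub : (e0 π hπ) a - (e0 π hπ) b
        = (Additive.ofMul (a * b⁻¹) : (relRep π hπ).asModule) := by
      rw [sub_eq_add_neg]
      rfl
    rw [hsub]
    exact hiff.trans (DD_iff_Qs π hπ (a * b⁻¹)))

noncomputable def EA : Additive ↥(relCoinv π)
    ≃+ ((relRep π hπ).asModule ⧸ DD π hπ) where
  toFun := fun x => EAq π hπ (eFull π (Additive.toMul x))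
  invFun := fun q => Additive.ofMul ((eFull π).symm ((EAq π hπ).symm q))
  left_inv := by
    intro x
    show Additive.ofMul ((eFull π).symm ((EAq π hπ).symm
      (EAq π hπ (eFull π (Additive.toMul x))))) = x
    rw [Equiv.symm_apply_apply, MulEquiv.symm_apply_apply]
    rfl
  right_inv := by
    intro q
    show EAq π hπ (eFull π (Additive.toMul (Additive.ofMul
      ((eFull π).symm ((EAq π hπ).symm q))))) = q
    rw [show Additive.toMul (Additive.ofMul ((eFull π).symm ((EAq π hπ).symm q)))
        = (eFull π).symm ((EAq π hπ).symm q) from rfl,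
      MulEquiv.apply_symm_apply, Equiv.apply_symm_apply]
  map_add' := by
    intro x y
    show EAq π hπ (eFull π (Additive.toMul x * Additive.toMul y))
      = EAq π hπ (eFull π (Additive.toMul x)) + EAq π hπ (eFull π (Additive.toMul y))
    rw [map_mul]
    exact Quotient.inductionOn₂' (eFull π (Additive.toMul x))
      (eFull π (Additive.toMul y)) (fun a b => rfl)

end GroupSide

theorem free_coinvariants_of_CA_decomposition
    [Finite X] (π : FreeGroup X →* G) (hπ : Function.Surjective π)
    -- hypothesis: the relation module decomposes as `⊕ᵢ ℤ[G]/ℤ[G](gᵢ - 1)`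
    (I : Type) [DecidableEq I] (g : I → G)
    (hdec : Nonempty ((relRep π hπ).asModule ≃ₗ[MonoidAlgebra ℤ G]
      ⨁ i : I, (MonoidAlgebra ℤ G ⧸
        Ideal.span {(MonoidAlgebra.of ℤ G (g i) : MonoidAlgebra ℤ G) - 1}))) :
    -- conclusion: `R/[R,F]` is free abelian, in particular torsion-free
    Module.Free ℤ (Additive ↥(relCoinv π)) ∧ (∀ g : ↥(relCoinv π), g ≠ 1 → ¬IsOfFinOrder g) := by
  obtain ⟨e⟩ := hdec
  have himg : ⇑e '' SDset π hπ = SpSet G I g := by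
    ext y
    constructor
    · rintro ⟨x, ⟨g', m, rfl⟩, rfl⟩
      exact ⟨g', e m, by rw [map_sub, map_smul]⟩
    · rintro ⟨g', m, rfl⟩
      obtain ⟨x, rfl⟩ := e.surjective m
      exact ⟨MonoidAlgebra.of ℤ G g' • x - x, ⟨g', x, rfl⟩, by rw [map_sub, map_smul]⟩
  have hmap : Submodule.map (e : (relRep π hπ).asModule →ₗ[MonoidAlgebra ℤ G] Pds G I g) (DD π hπ) = Dp G I g := by
    rw [DD, Dp, Submodule.map_span, LinearEquiv.coe_coe, himg]
  have qe := Submodule.Quotient.equiv (R := MonoidAlgebra ℤ G) (R₂ := MonoidAlgebra ℤ G) (M := (relRep π hπ).asModule) (N := Pds G I g) (DD π hπ) (Dp G I g) e hmap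
  have Efin : Additive ↥(relCoinv π) ≃+ ⨁ _ : I, ℤ :=
    (EA π hπ).trans (qe.toAddEquiv.trans (quotEquivFree G I g))
  have hfree : Module.Free ℤ (Additive ↥(relCoinv π)) :=
    Module.Free.of_equiv (Efin.symm.toIntLinearEquiv)
  refine ⟨hfree, ?_⟩
  haveI := hfree
  intro x hx1 hfin
  obtain ⟨n, hn, hxn⟩ := isOfFinOrder_iff_pow_eq_one.mp hfin
  apply hx1
  have h0 : (n : ℤ) • Additive.ofMul x = (0 : Additive ↥(relCoinv π)) := by
    rw [natCast_zsmul, ← ofMul_pow, hxn]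
    rfl
  rcases smul_eq_zero.mp h0 with hn0 | hx0
  · exact absurd (Int.natCast_eq_zero.mp hn0) (Nat.pos_iff_ne_zero.mp hn)
  · exact Additive.ofMul.injective hx0
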